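/- arXiv:2001.01262 — 4 statements merged into one kernel-verified Lean document; each statement's English description precedes it below -/
import Mathlib

section
/- Let a_k be nonnegative integers with gcd{k : a_k > 0} = 1, such that the radius of convergence of a(t) = Σ_{k≥1} a_k t^k equals 1, and let α ∈ (0,1) be the unique solution of a(α) = 1. Define b_0 = 1 and b_n = Σ_{k=1}^n a_k b_{n-k}. Then lim_{n→∞} b_n^{1/n} exists and equals 1/α. -/
open Finset Filter

section helpers

lemma aux_super (a b : ℕ → ℕ) (hb0 : b 0 = 1)
    (hb : ∀ n, 1 ≤ n → b n = ∑ k ∈ Finset.Icc 1 n, a k * b (n - k)) :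
    ∀ m n, b m * b n ≤ b (m + n) := by
  intro m
  induction m using Nat.strong_induction_on with
  | _ m ih =>
    intro n
    rcases Nat.eq_zero_or_pos m with hm | hm
    · subst hm; simp [hb0]
    · rw [hb m hm, hb (m + n) (by omega), Finset.sum_mul]
      calc ∑ k ∈ Icc 1 m, a k * b (m - k) * b n
          ≤ ∑ k ∈ Icc 1 m, a k * b (m + n - k) := by
            apply Finset.sum_le_sum
            intro k hk
            simp only [Finset.mem_Icc] at hk
            have h1 : m + n - k = (m - k) + n := by omega
            rw [h1, mul_assoc]
            exact Nat.mul_le_mul_left _ (ih (m - k) (by omega) n)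
        _ ≤ ∑ k ∈ Icc 1 (m + n), a k * b (m + n - k) :=
            Finset.sum_le_sum_of_subset (Finset.Icc_subset_Icc_right (by omega))

lemma aux_pow (a b : ℕ → ℕ) (hb0 : b 0 = 1)
    (hb : ∀ n, 1 ≤ n → b n = ∑ k ∈ Finset.Icc 1 n, a k * b (n - k)) :
    ∀ q m, b m ^ q ≤ b (q * m) := by
  intro q m
  induction q with
  | zero => simp [hb0]
  | succ q ih =>
    have := aux_super a b hb0 hb (q * m) m
    calc b m ^ (q + 1) = b m ^ q * b m := pow_succ _ _
      _ ≤ b (q * m) * b m := Nat.mul_le_mul_right _ ih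
      _ ≤ b (q * m + m) := this
      _ = b ((q + 1) * m) := by ring_nf

lemma aux_cofinite (S : AddSubmonoid ℕ) (T : Set ℕ) (hT : T ⊆ S)
    (hgcd : ∀ d : ℕ, (∀ k ∈ T, d ∣ k) → d = 1) :
    ∃ N, ∀ n, N ≤ n → n ∈ S := by
  classical
  set T' : Set ℤ := (Nat.cast : ℕ → ℤ) '' T with hT'
  obtain ⟨g, hg⟩ := Int.subgroup_cyclic (AddSubgroup.closure T')
  have hdvd : ∀ k ∈ T, g.natAbs ∣ k := by
    intro k hk
    have hk1 : (k : ℤ) ∈ AddSubgroup.closure T' :=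
      AddSubgroup.subset_closure ⟨k, hk, rfl⟩
    rw [hg, AddSubgroup.mem_closure_singleton] at hk1
    obtain ⟨n, hn⟩ := hk1
    have : g ∣ (k : ℤ) := ⟨n, by rw [← hn, zsmul_eq_mul, Int.cast_id, mul_comm]⟩
    exact Int.natAbs_dvd_natAbs.mpr this |>.trans (by simp)
  have hg1 : g.natAbs = 1 := hgcd _ hdvd
  have h1mem : (1 : ℤ) ∈ AddSubgroup.closure T' := by
    rw [hg, AddSubgroup.mem_closure_singleton]
    rcases Int.natAbs_eq_iff.mp hg1 with h | h
    · exact ⟨1, by simp [h]⟩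
    · exact ⟨-1, by simp [h]⟩
  -- move to submonoid closure
  have h1mem' : (1 : ℤ) ∈ AddSubmonoid.closure (T' ∪ -T') := by
    rw [← AddSubgroup.closure_toAddSubmonoid]
    exact h1mem
  rw [AddSubmonoid.closure_union, AddSubmonoid.mem_sup] at h1mem'
  obtain ⟨y, hy, z, hz, hyz⟩ := h1mem'
  rw [AddSubmonoid.closure_neg, AddSubmonoid.mem_neg] at hz
  have hmap : AddSubmonoid.closure T' =
      (AddSubmonoid.closure T).map (Nat.castAddMonoidHom ℤ) := by
    rw [AddMonoidHom.map_mclosure]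
    rfl
  rw [hmap] at hy hz
  obtain ⟨y₀, hy₀, hy₀e⟩ := hy
  obtain ⟨w₀, hw₀, hw₀e⟩ := hz
  have hMS : AddSubmonoid.closure T ≤ S := AddSubmonoid.closure_le.2 hT
  have hy₀S : y₀ ∈ S := hMS hy₀
  have hw₀S : w₀ ∈ S := hMS hw₀
  have heq : y₀ = w₀ + 1 := by
    have e1 : (y₀ : ℤ) = y := by simpa using hy₀e
    have e2 : (w₀ : ℤ) = -z := by simpa using hw₀e
    omega
  rcases Nat.eq_zero_or_pos w₀ with hw | hw
  · refine ⟨0, fun n _ => ?_⟩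
    have h1S : (1 : ℕ) ∈ S := by simpa [heq, hw] using hy₀S
    have := S.nsmul_mem h1S n
    simpa using this
  · refine ⟨w₀ * w₀, fun n hn => ?_⟩
    set q := n / w₀ with hq
    set r := n % w₀ with hr
    have hrw : r < w₀ := Nat.mod_lt _ hw
    have hqw : w₀ ≤ q := by
      rw [hq, Nat.le_div_iff_mul_le hw]
      exact hn
    have hdm : w₀ * q + r = n := Nat.div_add_mod n w₀
    have hrq : r ≤ q := le_of_lt (lt_of_lt_of_le hrw hqw)
    have hdm' : (w₀ : ℤ) * q + r = n := by exact_mod_cast hdm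
    have hkey : n = (q - r) * w₀ + r * (w₀ + 1) := by
      zify [hrq]
      linear_combination -hdm'
    rw [hkey]
    have h1 := S.nsmul_mem hw₀S (q - r)
    have h2 := S.nsmul_mem (heq ▸ hy₀S) r
    simpa [smul_eq_mul] using S.add_mem h1 h2

lemma aux_upper (a : ℕ → ℕ) (α : ℝ) (h0 : 0 < α)
    (hsum : Summable fun k => (a k : ℝ) * α ^ k)
    (hle : ∑' k, (a k : ℝ) * α ^ k = 1)
    (b : ℕ → ℕ) (hb0 : b 0 = 1)
    (hb : ∀ n, 1 ≤ n → b n = ∑ k ∈ Finset.Icc 1 n, a k * b (n - k)) :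
    ∀ n, (b n : ℝ) * α ^ n ≤ 1 := by
  intro n
  induction n using Nat.strong_induction_on with
  | _ n ih =>
    rcases Nat.eq_zero_or_pos n with hn | hn
    · simp [hn, hb0]
    · rw [hb n hn]
      push_cast
      calc (∑ k ∈ Icc 1 n, (a k : ℝ) * (b (n - k) : ℝ)) * α ^ n
          = ∑ k ∈ Icc 1 n, (a k : ℝ) * α ^ k * ((b (n - k) : ℝ) * α ^ (n - k)) := by
            rw [Finset.sum_mul]
            refine Finset.sum_congr rfl fun k hk => ?_
            simp only [Finset.mem_Icc] at hk
            have hpow : α ^ k * α ^ (n - k) = α ^ n := by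
              rw [← pow_add]; congr 1; omega
            rw [← hpow]; ring
        _ ≤ ∑ k ∈ Icc 1 n, (a k : ℝ) * α ^ k * 1 := by
            refine Finset.sum_le_sum fun k hk => ?_
            simp only [Finset.mem_Icc] at hk
            exact mul_le_mul_of_nonneg_left (ih (n - k) (by omega)) (by positivity)
        _ = ∑ k ∈ Icc 1 n, (a k : ℝ) * α ^ k := by simp
        _ ≤ ∑' k, (a k : ℝ) * α ^ k := Summable.sum_le_tsum _ (fun k _ => by positivity) hsum
        _ = 1 := hle

lemma aux_key (a : ℕ → ℕ) (ha0 : a 0 = 0)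
    (hrad1 : ∀ t : ℝ, 0 ≤ t → t < 1 → Summable fun k => (a k : ℝ) * t ^ k)
    (α : ℝ) (hα : α ∈ Set.Ioo (0 : ℝ) 1) (hα1 : ∑' k, (a k : ℝ) * α ^ k = 1)
    (b : ℕ → ℕ) (hb0 : b 0 = 1)
    (hb : ∀ n, 1 ≤ n → b n = ∑ k ∈ Finset.Icc 1 n, a k * b (n - k)) :
    ∀ c : ℝ, 1 < c → c < 1 / α → ∃ m, 1 ≤ m ∧ c ^ m < (b m : ℝ) := by
  intro c hc1 hcα
  by_contra hcon
  push_neg at hcon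
  have hcon' : ∀ m, 1 ≤ m → (b m : ℝ) ≤ c ^ m := fun m hm => hcon m hm
  have hc0 : (0 : ℝ) < c := lt_trans one_pos hc1
  have hαc : α < 1 / c := by
    rw [lt_div_iff₀ hc0]
    calc α * c < α * (1 / α) := by
          exact mul_lt_mul_of_pos_left hcα hα.1
      _ = 1 := mul_one_div_cancel (ne_of_gt hα.1)
  set t : ℝ := (α + 1 / c) / 2 with htdef
  have ht0 : 0 < t := by rw [htdef]; rcases hα.1 with h; positivity
  have htα : α < t := by rw [htdef]; linarith
  have htc : t < 1 / c := by rw [htdef]; linarith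
  have htc1 : c * t < 1 := by
    rw [← lt_div_iff₀' hc0]; exact htc
  have ht1 : t < 1 := lt_trans htc (by rw [div_lt_one hc0]; exact hc1)
  set g : ℕ → ℝ := fun n => (b n : ℝ) * t ^ n with hgdef
  have hgnonneg : ∀ n, 0 ≤ g n := fun n => by positivity
  have hgle : ∀ n, g n ≤ (c * t) ^ n := by
    intro n
    rcases Nat.eq_zero_or_pos n with hn | hn
    · simp [hn, hgdef, hb0]
    · calc g n ≤ c ^ n * t ^ n :=
          mul_le_mul_of_nonneg_right (hcon' n hn) (by positivity)
        _ = (c * t) ^ n := (mul_pow c t n).symm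
  have hgsum : Summable g :=
    Summable.of_nonneg_of_le hgnonneg hgle
      (summable_geometric_of_lt_one (by positivity) htc1)
  set f : ℕ → ℝ := fun k => (a k : ℝ) * t ^ k with hfdef
  have hfsum : Summable f := hrad1 t ht0.le ht1
  have hfn : Summable fun k => ‖f k‖ := by
    have : (fun k => ‖f k‖) = f := funext fun k => Real.norm_of_nonneg (by positivity)
    rw [this]; exact hfsum
  have hgn : Summable fun n => ‖g n‖ := by
    have : (fun n => ‖g n‖) = g := funext fun n => Real.norm_of_nonneg (hgnonneg n)
    rw [this]; exact hgsum
  have hprod := tsum_mul_tsum_eq_tsum_sum_antidiagonal_of_summable_norm hfn hgn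
  -- rewrite hb sums over range
  have hbr : ∀ n, 1 ≤ n → ∑ k ∈ Finset.range (n + 1), a k * b (n - k) = b n := by
    intro n hn
    rw [hb n hn]
    refine (Finset.sum_subset (fun x hx => ?_) (fun x hx hnx => ?_)).symm
    · simp only [Finset.mem_Icc] at hx; simp only [Finset.mem_range]; omega
    · simp only [Finset.mem_range] at hx
      simp only [Finset.mem_Icc] at hnx
      have : x = 0 := by omega
      simp [this, ha0]
  have hinner : ∀ n, ∑ kl ∈ Finset.HasAntidiagonal.antidiagonal n, f kl.1 * g kl.2
      = (if n = 0 then 0 else g n) := by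
    intro n
    rw [Finset.Nat.sum_antidiagonal_eq_sum_range_succ_mk]
    have hterm : ∀ k ∈ Finset.range (n + 1),
        f k * g (n - k) = ((a k * b (n - k) : ℕ) : ℝ) * t ^ n := by
      intro k hk
      simp only [Finset.mem_range] at hk
      have hpow : t ^ k * t ^ (n - k) = t ^ n := by
        rw [← pow_add]; congr 1; omega
      simp only [hfdef, hgdef]
      push_cast
      rw [← hpow]; ring
    rw [Finset.sum_congr rfl hterm, ← Finset.sum_mul, ← Nat.cast_sum]
    rcases Nat.eq_zero_or_pos n with hn | hn
    · simp [hn, ha0]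
    · rw [hbr n hn]
      simp only [hgdef]
      rw [if_neg (by omega)]
  rw [tsum_congr hinner] at hprod
  have hPsum : Summable fun n => if n = 0 then (0:ℝ) else g n := by
    refine Summable.of_nonneg_of_le (fun n => ?_) (fun n => ?_) hgsum
    · split <;> simp [hgnonneg]
    · split
      · exact hgnonneg n
      · exact le_refl _
  have hB : ∑' n, g n = 1 + ∑' n, g (n + 1) := by
    rw [Summable.tsum_eq_zero_add hgsum]; simp [hgdef, hb0]
  have hP : ∑' n, (if n = 0 then (0:ℝ) else g n) = ∑' n, g (n + 1) := by
    rw [Summable.tsum_eq_zero_add hPsum]; simp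
  have hAB : (∑' k, f k) * (∑' n, g n) = (∑' n, g n) - 1 := by
    rw [hprod, hP, hB]; ring
  have hA1 : 1 ≤ ∑' k, f k := by
    rw [← hα1]
    refine Summable.tsum_le_tsum (fun k => ?_) (hrad1 α hα.1.le hα.2) hfsum
    exact mul_le_mul_of_nonneg_left (pow_le_pow_left₀ hα.1.le htα.le k) (by positivity)
  have hB1 : 1 ≤ ∑' n, g n := by
    have := Summable.le_tsum hgsum 0 (fun n _ => hgnonneg n)
    simpa [hgdef, hb0] using this
  nlinarith [mul_le_mul_of_nonneg_right hA1 (le_trans zero_le_one hB1)]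

lemma aux_rpow_lim (x : ℝ) (hx : 0 < x) :
    Tendsto (fun n : ℕ => x ^ (1 / (n : ℝ))) atTop (nhds 1) := by
  have h1 : Tendsto (fun n : ℕ => Real.log x * (1 / (n : ℝ))) atTop (nhds 0) := by
    simpa using tendsto_one_div_atTop_nhds_zero_nat.const_mul (Real.log x)
  have h2 := (Real.continuous_exp.tendsto 0).comp h1
  simp only [Real.exp_zero] at h2
  refine h2.congr fun n => ?_
  simp only [Function.comp]
  rw [← Real.rpow_def_of_pos hx]

end helpers

theorem stmt5 (a : ℕ → ℕ) (ha0 : a 0 = 0)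
    (hgcd : ∀ d : ℕ, (∀ k, 0 < a k → d ∣ k) → d = 1)
    (hrad1 : ∀ t : ℝ, 0 ≤ t → t < 1 → Summable fun k => (a k : ℝ) * t ^ k)
    (hrad2 : ∀ t : ℝ, 1 < t → ¬ Summable fun k => (a k : ℝ) * t ^ k)
    (α : ℝ) (hα : α ∈ Set.Ioo (0 : ℝ) 1) (hα1 : ∑' k, (a k : ℝ) * α ^ k = 1)
    (b : ℕ → ℕ) (hb0 : b 0 = 1)
    (hb : ∀ n, 1 ≤ n → b n = ∑ k ∈ Finset.Icc 1 n, a k * b (n - k)) :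
    Filter.Tendsto (fun n : ℕ => (b n : ℝ) ^ (1 / (n : ℝ))) Filter.atTop (nhds (1 / α)) := by
  have hα0 : (0 : ℝ) < α := hα.1
  have h1α : (1 : ℝ) < 1 / α := one_lt_one_div hα0 hα.2
  -- the additive submonoid of n with b n ≥ 1
  set S : AddSubmonoid ℕ :=
    { carrier := {n | 1 ≤ b n}
      zero_mem' := by simp [hb0]
      add_mem' := by
        intro m n hm hn
        have h1 : 1 ≤ b m * b n := Nat.one_le_iff_ne_zero.mpr (by
          simp only [Set.mem_setOf_eq] at hm hn
          positivity)
        exact le_trans h1 (aux_super a b hb0 hb m n) } with hSdef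
  have hTS : {k : ℕ | 0 < a k} ⊆ (S : Set ℕ) := by
    intro k hk
    simp only [Set.mem_setOf_eq] at hk
    have hk1 : 1 ≤ k := by
      by_contra h
      have : k = 0 := by omega
      rw [this, ha0] at hk; omega
    have : a k * b 0 ≤ b k := by
      rw [hb k hk1]
      have := Finset.single_le_sum (f := fun j => a j * b (k - j))
        (fun i _ => Nat.zero_le _) (Finset.mem_Icc.mpr ⟨hk1, le_refl k⟩)
      simpa using this
    show 1 ≤ b k
    calc 1 ≤ a k := hk
      _ = a k * b 0 := by rw [hb0, mul_one]
      _ ≤ b k := this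
  obtain ⟨N, hN⟩ := aux_cofinite S {k : ℕ | 0 < a k} hTS
    (fun d hd => hgcd d (fun k hk => hd k hk))
  have hNb : ∀ n, N ≤ n → 1 ≤ b n := fun n hn => hN n hn
  -- upper bound
  have hbu : ∀ n, (b n : ℝ) ≤ (1 / α) ^ n := by
    intro n
    have h := aux_upper a α hα0 (hrad1 α hα0.le hα.2) hα1 b hb0 hb n
    rw [one_div, inv_pow, ← one_div]
    rw [le_div_iff₀ (by positivity)]
    exact h
  refine tendsto_order.2 ⟨?_, ?_⟩
  · -- lower bound
    intro c hc
    set c₁ : ℝ := (max c 1 + 1 / α) / 2 with hc₁def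
    have hmax : max c 1 < 1 / α := max_lt hc h1α
    have hc₁gt1 : 1 < c₁ := by
      have := le_max_right c 1
      rw [hc₁def]; linarith
    have hc₁lt : c₁ < 1 / α := by rw [hc₁def]; linarith
    have hcc₁ : c < c₁ := by
      have := le_max_left c 1
      rw [hc₁def]; linarith
    have hc₁0 : (0 : ℝ) < c₁ := lt_trans one_pos hc₁gt1
    obtain ⟨m, hm1, hcm⟩ := aux_key a ha0 hrad1 α hα hα1 b hb0 hb c₁ hc₁gt1 hc₁lt
    set C : ℝ := c₁ ^ (N + m) with hCdef
    have hCpos : 0 < C := by positivity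
    have hclaim : ∀ n, N ≤ n → c₁ ^ n ≤ (b n : ℝ) * C := by
      intro n hNn
      set q := (n - N) / m with hq
      set r := (n - N) % m with hr
      set s := N + r with hs
      have hrm : r < m := Nat.mod_lt _ (by omega)
      have h1 : m * q + r = n - N := Nat.div_add_mod _ _
      have hn' : n = m * q + s := by
        calc n = (n - N) + N := (Nat.sub_add_cancel hNn).symm
          _ = (m * q + r) + N := by rw [h1]
          _ = m * q + s := by rw [hs]; ring
      -- b n ≥ c₁ ^ (m * q)
      have hb1 : (c₁ ^ m) ^ q ≤ ((b m : ℝ)) ^ q :=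
        pow_le_pow_left₀ (by positivity) hcm.le q
      have hb2 : ((b m : ℝ)) ^ q ≤ (b (q * m) : ℝ) := by
        exact_mod_cast aux_pow a b hb0 hb q m
      have hb3 : (b (q * m) : ℝ) ≤ (b n : ℝ) := by
        have hs1 : 1 ≤ b s := hNb s (by omega)
        have : b (q * m) * b s ≤ b (q * m + s) := aux_super a b hb0 hb _ _
        have h4 : b (q * m) ≤ b n := by
          calc b (q * m) = b (q * m) * 1 := (mul_one _).symm
            _ ≤ b (q * m) * b s := Nat.mul_le_mul_left _ hs1
            _ ≤ b (q * m + s) := this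
            _ = b n := by rw [hn', mul_comm q m]
        exact_mod_cast h4
      have hbn : c₁ ^ (m * q) ≤ (b n : ℝ) := by
        rw [pow_mul]
        exact le_trans hb1 (le_trans hb2 hb3)
      have hCs : c₁ ^ s ≤ C := by
        rw [hCdef]
        exact pow_le_pow_right₀ hc₁gt1.le (by omega)
      calc c₁ ^ n = c₁ ^ (m * q) * c₁ ^ s := by rw [hn', pow_add]
        _ ≤ (b n : ℝ) * C := mul_le_mul hbn hCs (by positivity) (Nat.cast_nonneg _)
    have htends : Tendsto (fun n : ℕ => c₁ * C⁻¹ ^ (1 / (n : ℝ))) atTop (nhds c₁) := by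
      have := (aux_rpow_lim C⁻¹ (by positivity)).const_mul c₁
      simpa using this
    have hev1 : ∀ᶠ n : ℕ in atTop, c < c₁ * C⁻¹ ^ (1 / (n : ℝ)) :=
      htends.eventually (eventually_gt_nhds hcc₁)
    filter_upwards [hev1, eventually_ge_atTop (max N 1)] with n h₁ h₂
    have hnN : N ≤ n := le_trans (le_max_left _ _) h₂
    have hn1 : 1 ≤ n := le_trans (le_max_right _ _) h₂
    have hnne : (n : ℝ) ≠ 0 := by
      have : (0 : ℝ) < n := by exact_mod_cast hn1
      exact ne_of_gt this
    have hle : c₁ ^ n * C⁻¹ ≤ (b n : ℝ) := by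
      rw [← div_eq_mul_inv, div_le_iff₀ hCpos]
      exact hclaim n hnN
    have h3 : (c₁ ^ n * C⁻¹) ^ (1 / (n : ℝ)) ≤ (b n : ℝ) ^ (1 / (n : ℝ)) :=
      Real.rpow_le_rpow (by positivity) hle (by positivity)
    have h4 : (c₁ ^ n * C⁻¹) ^ (1 / (n : ℝ)) = c₁ * C⁻¹ ^ (1 / (n : ℝ)) := by
      rw [Real.mul_rpow (by positivity) (by positivity)]
      congr 1
      rw [← Real.rpow_natCast c₁ n, ← Real.rpow_mul hc₁0.le,
        mul_one_div_cancel hnne, Real.rpow_one]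
    rw [h4] at h3
    exact lt_of_lt_of_le h₁ h3
  · -- upper bound
    intro c hc
    filter_upwards [eventually_ge_atTop 1] with n hn
    have hnne : (n : ℝ) ≠ 0 := by
      have : (0 : ℝ) < n := by exact_mod_cast hn
      exact ne_of_gt this
    have h1 : ((b n : ℝ)) ^ (1 / (n : ℝ)) ≤ ((1 / α) ^ n) ^ (1 / (n : ℝ)) :=
      Real.rpow_le_rpow (Nat.cast_nonneg _) (hbu n) (by positivity)
    have h2 : (((1 / α) ^ n : ℝ)) ^ (1 / (n : ℝ)) = 1 / α := by
      rw [← Real.rpow_natCast (1 / α) n, ← Real.rpow_mul (by positivity),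
        mul_one_div_cancel hnne, Real.rpow_one]
    rw [h2] at h1
    exact lt_of_le_of_lt h1 hc
end

section
/- Let b_n denote the number of ways to write n as an ordered sum of perfect squares (compositions of n into parts from {1, 4, 9, 16, ...}). Then lim_{n→∞} b_n^{1/n} exists and equals 1/α, where α ∈ (0,1) is the unique positive solution of Σ_{m≥1} t^{m²} = 1. -/
open Finset Filter

section aux
variable {b : ℕ → ℕ} (hb0 : b 0 = 1)
  (hb : ∀ n, 1 ≤ n → b n = ∑ m ∈ Finset.Icc 1 n, if m ^ 2 ≤ n then b (n - m ^ 2) else 0)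

include hb0 hb in
lemma b_one_le : ∀ n, 1 ≤ b n := by
  intro n
  induction n with
  | zero => omega
  | succ n ih =>
    rw [hb (n+1) (by omega)]
    calc 1 ≤ b n := ih
    _ = (if 1 ^ 2 ≤ n + 1 then b (n + 1 - 1 ^ 2) else 0) := by norm_num
    _ ≤ _ := Finset.single_le_sum (f := fun m => if m ^ 2 ≤ n + 1 then b (n + 1 - m ^ 2) else 0)
        (fun i _ => Nat.zero_le _) (Finset.mem_Icc.mpr (by omega : 1 ≤ 1 ∧ 1 ≤ n + 1))

include hb0 hb in
lemma b_super (m : ℕ) : ∀ n, b m * b n ≤ b (m + n) := by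
  intro n
  induction n using Nat.strong_induction_on with
  | _ n ih =>
    rcases Nat.eq_zero_or_pos n with rfl | hn
    · simp [hb0]
    · rw [hb n hn, hb (m + n) (by omega), Finset.mul_sum]
      calc ∑ k ∈ Icc 1 n, (b m * if k ^ 2 ≤ n then b (n - k ^ 2) else 0)
          ≤ ∑ k ∈ Icc 1 n, (if k ^ 2 ≤ m + n then b (m + n - k ^ 2) else 0) := by
            refine Finset.sum_le_sum fun k hk => ?_
            simp only [Finset.mem_Icc] at hk
            split_ifs with h1 h2 h2
            · have : m + n - k ^ 2 = m + (n - k ^ 2) := by omega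
              rw [this]
              exact ih (n - k ^ 2) (by have hk2 : 1 ≤ k^2 := Nat.one_le_pow 2 k (by omega); omega)
            · omega
            · exact Nat.zero_le _
            · exact Nat.zero_le _
        _ ≤ _ := Finset.sum_le_sum_of_subset (Finset.Icc_subset_Icc_right (by omega))
end aux

lemma summ_sq {t : ℝ} (h0 : 0 ≤ t) (h1 : t < 1) : Summable (fun m : ℕ => t ^ ((m + 1) ^ 2)) := by
  refine Summable.of_nonneg_of_le (fun m => pow_nonneg h0 _) (fun m => ?_)
    (summable_geometric_of_lt_one h0 h1)
  exact pow_le_pow_of_le_one h0 h1.le (by nlinarith)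

lemma partial_le_one {α : ℝ} (hα : α ∈ Set.Ioo (0:ℝ) 1) (hα1 : ∑' m : ℕ, α ^ ((m + 1) ^ 2) = 1)
    (n : ℕ) : ∑ m ∈ Icc 1 n, α ^ (m ^ 2) ≤ 1 := by
  rw [← Finset.Ico_add_one_right_eq_Icc, Finset.sum_Ico_eq_sum_range]
  simp only [Nat.succ_sub_one, Nat.add_sub_cancel]
  rw [← hα1]
  have h2 : ∀ i : ℕ, (1 + i) ^ 2 = (i + 1) ^ 2 := fun i => by rw [add_comm]
  simp only [h2]
  exact Summable.sum_le_tsum _ (fun i _ => pow_nonneg hα.1.le _) (summ_sq hα.1.le hα.2)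

lemma upper_bd {b : ℕ → ℕ} (hb0 : b 0 = 1)
    (hb : ∀ n, 1 ≤ n → b n = ∑ m ∈ Finset.Icc 1 n, if m ^ 2 ≤ n then b (n - m ^ 2) else 0)
    {α : ℝ} (hα : α ∈ Set.Ioo (0:ℝ) 1) (hα1 : ∑' m : ℕ, α ^ ((m + 1) ^ 2) = 1) :
    ∀ n, α ^ n * (b n : ℝ) ≤ 1 := by
  intro n
  induction n using Nat.strong_induction_on with
  | _ n ih =>
    rcases Nat.eq_zero_or_pos n with rfl | hn
    · simp [hb0]
    · rw [hb n hn]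
      push_cast
      rw [Finset.mul_sum]
      calc ∑ m ∈ Icc 1 n, α ^ n * (if m ^ 2 ≤ n then ((b (n - m ^ 2) : ℝ)) else 0)
          ≤ ∑ m ∈ Icc 1 n, (if m ^ 2 ≤ n then α ^ (m ^ 2) else 0) := by
            refine Finset.sum_le_sum fun m hm => ?_
            rw [mul_ite, mul_zero]
            split_ifs with h
            · have hn' : n = m ^ 2 + (n - m ^ 2) := by omega
              have hm1 : 1 ≤ m ^ 2 := Nat.one_le_pow 2 m (by simp only [Finset.mem_Icc] at hm; omega)
              calc α ^ n * (b (n - m ^ 2) : ℝ)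
                  = α ^ (m ^ 2) * (α ^ (n - m ^ 2) * (b (n - m ^ 2) : ℝ)) := by
                    rw [← mul_assoc, ← pow_add, ← hn']
                _ ≤ α ^ (m ^ 2) * 1 :=
                    mul_le_mul_of_nonneg_left (ih _ (by omega)) (pow_nonneg hα.1.le _)
                _ = α ^ (m ^ 2) := mul_one _
            · exact le_rfl
        _ ≤ ∑ m ∈ Icc 1 n, α ^ (m ^ 2) := by
            refine Finset.sum_le_sum fun m _ => ?_
            split_ifs
            · exact le_rfl
            · exact pow_nonneg hα.1.le _
        _ ≤ 1 := partial_le_one hα hα1 n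

lemma key_ineq {b : ℕ → ℕ} (hb0 : b 0 = 1)
    (hb : ∀ n, 1 ≤ n → b n = ∑ m ∈ Finset.Icc 1 n, if m ^ 2 ≤ n then b (n - m ^ 2) else 0)
    {t : ℝ} (ht0 : 0 ≤ t) (M N : ℕ) (hM : 1 ≤ M) (hMN : M ^ 2 ≤ N) :
    (∑ m ∈ Icc 1 M, t ^ (m ^ 2)) * (∑ k ∈ range (N - M ^ 2 + 1), (b k : ℝ) * t ^ k) + 1
      ≤ ∑ n ∈ range (N + 1), (b n : ℝ) * t ^ n := by
  set F : ℕ → ℕ → ℝ := fun n m =>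
    if m ^ 2 ≤ n then t ^ (m ^ 2) * ((b (n - m ^ 2) : ℝ) * t ^ (n - m ^ 2)) else 0 with hF
  have hFnonneg : ∀ n m, 0 ≤ F n m := by
    intro n m
    rw [hF]
    dsimp only
    split_ifs
    · positivity
    · exact le_rfl
  -- split off n = 0 term of RHS
  have hsplit : ∑ n ∈ range (N + 1), (b n : ℝ) * t ^ n
      = (∑ n ∈ Icc 1 N, (b n : ℝ) * t ^ n) + 1 := by
    rw [Finset.sum_range_succ' (fun n => (b n : ℝ) * t ^ n) N]
    rw [← Finset.Ico_add_one_right_eq_Icc, Finset.sum_Ico_eq_sum_range]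
    simp only [Nat.succ_sub_one, Nat.add_sub_cancel, hb0, Nat.cast_one, pow_zero, mul_one, add_comm 1]
  rw [hsplit]
  gcongr ?_ + 1
  -- rewrite each term of RHS as a row sum of F
  have hrow : ∀ n ∈ Icc 1 N, (b n : ℝ) * t ^ n = ∑ m ∈ Icc 1 N, F n m := by
    intro n hn
    simp only [Finset.mem_Icc] at hn
    rw [hb n hn.1]
    push_cast
    rw [Finset.sum_mul]
    rw [← Finset.sum_subset (Finset.Icc_subset_Icc_right hn.2 : Icc 1 n ⊆ Icc 1 N)
      (fun m hmN hm => ?_)]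
    · refine Finset.sum_congr rfl fun m hm => ?_
      rw [hF]
      dsimp only
      rw [ite_mul, zero_mul]
      split_ifs with h
      · have h' : n = m ^ 2 + (n - m ^ 2) := by omega
        rw [mul_comm ((b (n - m ^ 2) : ℝ)) (t ^ n), h', pow_add]
        simp only [Nat.add_sub_cancel_left]
        ring
      · rfl
    · -- m ∈ Icc 1 N, m ∉ Icc 1 n ⟹ F n m = 0
      simp only [Finset.mem_Icc, not_and, not_le] at hmN hm
      have hne : ¬ m ^ 2 ≤ n := by push_neg; nlinarith [hm hmN.1]
      simp only [hF, if_neg hne]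
  rw [Finset.sum_congr rfl hrow, Finset.sum_comm, Finset.sum_mul]
  -- drop columns with m > M
  have hsub : ∑ m ∈ Icc 1 M, (∑ n ∈ Icc 1 N, F n m)
      ≤ ∑ m ∈ Icc 1 N, ∑ n ∈ Icc 1 N, F n m := by
    refine Finset.sum_le_sum_of_subset_of_nonneg
      (Finset.Icc_subset_Icc_right (le_trans (Nat.le_of_lt_succ ?_) hMN |>.trans le_rfl)) ?_
    · exact Nat.lt_succ_of_le (Nat.le_self_pow (by norm_num) M)
    · intro m _ _
      exact Finset.sum_nonneg fun n _ => hFnonneg n m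
  refine le_trans (Finset.sum_le_sum fun m hm => ?_) hsub
  -- for each m ≤ M, column sum ≥ t^{m²} * S(N - M²)
  simp only [Finset.mem_Icc] at hm
  have hm2 : m ^ 2 ≤ M ^ 2 := Nat.pow_le_pow_left hm.2 2
  have h1m : 1 ≤ m ^ 2 := Nat.one_le_pow 2 m (by omega)
  calc t ^ m ^ 2 * (∑ k ∈ range (N - M ^ 2 + 1), (b k : ℝ) * t ^ k)
      = ∑ k ∈ range (N - M ^ 2 + 1), F (m ^ 2 + k) m := by
        rw [Finset.mul_sum]
        refine Finset.sum_congr rfl fun k _ => ?_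
        rw [hF]
        dsimp only
        rw [if_pos (Nat.le_add_right _ _), Nat.add_sub_cancel_left]
    _ = ∑ n ∈ Icc (m ^ 2) (m ^ 2 + (N - M ^ 2)), F n m := by
        rw [← Finset.Ico_add_one_right_eq_Icc, Finset.sum_Ico_eq_sum_range,
          (by omega : m ^ 2 + (N - M ^ 2) + 1 - m ^ 2 = N - M ^ 2 + 1)]
    _ ≤ ∑ n ∈ Icc 1 N, F n m := by
        refine Finset.sum_le_sum_of_subset_of_nonneg (Finset.Icc_subset_Icc (by omega) (by omega))
          fun n _ _ => hFnonneg n m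

theorem stmt10 (b : ℕ → ℕ) (hb0 : b 0 = 1)
    (hb : ∀ n, 1 ≤ n → b n = ∑ m ∈ Finset.Icc 1 n, if m ^ 2 ≤ n then b (n - m ^ 2) else 0)
    (α : ℝ) (hα : α ∈ Set.Ioo (0 : ℝ) 1) (hα1 : ∑' m : ℕ, α ^ ((m + 1) ^ 2) = 1) :
    Filter.Tendsto (fun n : ℕ => (b n : ℝ) ^ (1 / (n : ℝ))) Filter.atTop (nhds (1 / α)) := by
  obtain ⟨hα0, hαlt1⟩ := id hα
  have hb1 : ∀ n, 1 ≤ b n := b_one_le hb0 hb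
  have hbpos : ∀ n, (0:ℝ) < (b n : ℝ) := fun n => by exact_mod_cast hb1 n
  set u : ℕ → ℝ := fun n => - Real.log (b n) with hu_def
  -- subadditivity
  have husub : Subadditive u := by
    intro m n
    have h1 : ((b m * b n : ℕ) : ℝ) ≤ ((b (m + n) : ℕ) : ℝ) := by
      exact_mod_cast b_super hb0 hb m n
    push_cast at h1
    have h2 := Real.log_le_log (mul_pos (hbpos m) (hbpos n)) h1
    rw [Real.log_mul (ne_of_gt (hbpos m)) (ne_of_gt (hbpos n))] at h2
    simp only [hu_def]
    linarith
  -- lower bound on u n / n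
  have hlogα : Real.log α < 0 := Real.log_neg hα0 hαlt1
  have hun : ∀ n : ℕ, 1 ≤ n → Real.log α ≤ u n / n := by
    intro n hn
    have h := upper_bd hb0 hb hα hα1 n
    have hlog : Real.log (α ^ n * (b n : ℝ)) ≤ 0 := by
      calc Real.log (α ^ n * (b n : ℝ)) ≤ Real.log 1 := by
            refine Real.log_le_log (mul_pos (pow_pos hα0 n) (hbpos n)) h
        _ = 0 := Real.log_one
    rw [Real.log_mul (by positivity) (ne_of_gt (hbpos n)), Real.log_pow] at hlog
    have hnpos : (0:ℝ) < n := by exact_mod_cast hn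
    rw [le_div_iff₀ hnpos]
    simp only [hu_def]
    nlinarith
  have hbdd : BddBelow (Set.range fun n : ℕ => u n / n) := by
    refine ⟨Real.log α, fun x hx => ?_⟩
    obtain ⟨n, rfl⟩ := hx
    rcases Nat.eq_zero_or_pos n with rfl | hn
    · simp only [hu_def, hb0, Nat.cast_one, Real.log_one, neg_zero, Nat.cast_zero, div_zero]
      linarith
    · exact hun n hn
  have htend := husub.tendsto_lim hbdd
  -- b 1 = 1
  have hb1val : b 1 = 1 := by
    rw [hb 1 le_rfl]
    simp [hb0]
  have hu1 : u 1 / 1 = 0 := by simp [hu_def, hb1val]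
  have hlim_le : husub.lim ≤ 0 := by
    have := husub.lim_le_div hbdd (n := 1) one_ne_zero
    rwa [Nat.cast_one, hu1] at this
  have hlim_ge : Real.log α ≤ husub.lim := by
    rw [Subadditive.lim]
    refine le_csInf ⟨_, ⟨1, Set.mem_Ici.2 le_rfl, rfl⟩⟩ ?_
    rintro x ⟨n, hn, rfl⟩
    exact hun n hn
  -- the crucial equality
  have hlim_eq : husub.lim = Real.log α := by
    refine le_antisymm ?_ hlim_ge
    by_contra hcon
    push_neg at hcon
    set β := Real.exp husub.lim with hβ
    have hβpos : 0 < β := Real.exp_pos _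
    have hαβ : α < β := by
      calc α = Real.exp (Real.log α) := (Real.exp_log hα0).symm
        _ < β := Real.exp_lt_exp.2 hcon
    have hβ1 : β ≤ 1 := by
      calc β ≤ Real.exp 0 := Real.exp_le_exp.2 hlim_le
        _ = 1 := Real.exp_zero
    set t := (α + β) / 2 with htdef
    have ht0 : 0 < t := by simp only [htdef]; linarith
    have htα : α < t := by simp only [htdef]; linarith
    have htβ : t < β := by simp only [htdef]; linarith
    have ht1 : t < 1 := lt_of_lt_of_le htβ hβ1
    -- b n * β^n ≤ 1
    have hbnb : ∀ n : ℕ, (b n : ℝ) * β ^ n ≤ 1 := by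
      intro n
      rcases Nat.eq_zero_or_pos n with rfl | hn
      · simp [hb0]
      · have h1 : husub.lim ≤ u n / n := husub.lim_le_div hbdd (by omega)
        have hnpos : (0:ℝ) < n := by exact_mod_cast hn
        have h2 : Real.log (b n) + n * husub.lim ≤ 0 := by
          rw [le_div_iff₀ hnpos] at h1
          simp only [hu_def] at h1
          nlinarith
        calc (b n : ℝ) * β ^ n = Real.exp (Real.log (b n) + n * husub.lim) := by
              rw [Real.exp_add, Real.exp_log (hbpos n), hβ, ← Real.exp_nat_mul]
          _ ≤ Real.exp 0 := Real.exp_le_exp.2 h2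
          _ = 1 := Real.exp_zero
    -- term bound
    have hterm : ∀ n : ℕ, (b n : ℝ) * t ^ n ≤ (t / β) ^ n := by
      intro n
      rw [div_pow t β n, le_div_iff₀ (pow_pos hβpos n)]
      calc (b n : ℝ) * t ^ n * β ^ n = ((b n : ℝ) * β ^ n) * t ^ n := by ring
        _ ≤ 1 * t ^ n := by
            exact mul_le_mul_of_nonneg_right (hbnb n) (pow_nonneg ht0.le n)
        _ = t ^ n := one_mul _
    have hrlt : t / β < 1 := (div_lt_one hβpos).2 htβ
    have hr0 : 0 ≤ t / β := div_nonneg ht0.le hβpos.le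
    have hSbound : ∀ N : ℕ, ∑ n ∈ range (N + 1), (b n : ℝ) * t ^ n ≤ (1 - t / β)⁻¹ := by
      intro N
      calc ∑ n ∈ range (N + 1), (b n : ℝ) * t ^ n ≤ ∑ n ∈ range (N + 1), (t / β) ^ n :=
            Finset.sum_le_sum fun n _ => hterm n
        _ ≤ ∑' n : ℕ, (t / β) ^ n :=
            Summable.sum_le_tsum _ (fun n _ => pow_nonneg hr0 n) (summable_geometric_of_lt_one hr0 hrlt)
        _ = (1 - t / β)⁻¹ := tsum_geometric_of_lt_one hr0 hrlt
    -- f(t) > 1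
    have hft : 1 < ∑' m : ℕ, t ^ ((m + 1) ^ 2) := by
      rw [← hα1]
      refine Summable.tsum_lt_tsum_of_nonneg (i := 0) (fun m => pow_nonneg hα0.le _)
        (fun m => pow_le_pow_left₀ hα0.le htα.le _) ?_ (summ_sq ht0.le ht1)
      exact pow_lt_pow_left₀ htα hα0.le (by norm_num)
    -- choose M
    obtain ⟨M, hM⟩ : ∃ M : ℕ, 1 < ∑ i ∈ range M, t ^ ((i + 1) ^ 2) := by
      have h := (summ_sq ht0.le ht1).hasSum.tendsto_sum_nat
      exact (h.eventually (lt_mem_nhds hft)).exists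
    have hM1 : 1 ≤ M := by
      by_contra h
      push_neg at h
      interval_cases M
      norm_num at hM
    set g : ℝ := ∑ m ∈ Icc 1 M, t ^ (m ^ 2) with hg
    have hg1 : 1 < g := by
      rw [hg, ← Finset.Ico_add_one_right_eq_Icc, Finset.sum_Ico_eq_sum_range]
      simp only [Nat.succ_sub_one, Nat.add_sub_cancel]
      have h2 : ∀ i : ℕ, (1 + i) ^ 2 = (i + 1) ^ 2 := fun i => by rw [add_comm]
      simp only [h2]
      exact hM
    have hg0 : 0 ≤ g := by linarith
    -- iterate the key inequality
    have hiter : ∀ k : ℕ, g ^ k ≤ ∑ n ∈ range (k * M ^ 2 + 1), (b n : ℝ) * t ^ n := by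
      intro k
      induction k with
      | zero => simp [hb0]
      | succ k ih =>
        have hle : M ^ 2 ≤ (k + 1) * M ^ 2 := Nat.le_mul_of_pos_left _ (by omega)
        have hsub : (k + 1) * M ^ 2 - M ^ 2 = k * M ^ 2 := by
          rw [add_mul, one_mul, Nat.add_sub_cancel]
        have hkey := key_ineq hb0 hb ht0.le M ((k + 1) * M ^ 2) hM1 hle
        rw [hsub] at hkey
        calc g ^ (k + 1) = g * g ^ k := by ring
          _ ≤ g * ∑ n ∈ range (k * M ^ 2 + 1), (b n : ℝ) * t ^ n :=
              mul_le_mul_of_nonneg_left ih hg0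
          _ ≤ g * (∑ n ∈ range (k * M ^ 2 + 1), (b n : ℝ) * t ^ n) + 1 := by linarith
          _ ≤ _ := hkey
    obtain ⟨k, hk⟩ := pow_unbounded_of_one_lt ((1 - t / β)⁻¹) hg1
    have := (hiter k).trans (hSbound (k * M ^ 2))
    linarith
  -- conclude
  rw [hlim_eq] at htend
  have hfinal : Tendsto (fun n : ℕ => Real.exp (-(u n / n))) atTop
      (nhds (Real.exp (- Real.log α))) :=
    (Real.continuous_exp.continuousAt.tendsto).comp htend.neg
  have hval : Real.exp (- Real.log α) = 1 / α := by
    rw [Real.exp_neg, Real.exp_log hα0, one_div]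
  rw [hval] at hfinal
  refine hfinal.congr' ?_
  filter_upwards [eventually_ge_atTop 1] with n hn
  have hnpos : (0:ℝ) < n := by exact_mod_cast hn
  rw [Real.rpow_def_of_pos (hbpos n)]
  congr 1
  simp only [hu_def]
  field_simp
end

section
/- For any fixed integer d ≥ 2, let b_n be the number of compositions of n into parts of the form (d−1)m² + 1 with m ≥ 1 (each part of each size having one color). Then lim_{n→∞} b_n^{1/n} exists and equals 1/α, where α is the unique solution in (0,1) of Σ_{m≥1} t^{(d−1)m²+1} = 1. -/
open Finset Filter
open Finset

lemma st15_part_lt (d : ℕ) (hd : 2 ≤ d) (m : ℕ) (hm : 1 ≤ m) : m < (d-1)*m^2+1 := by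
  have h1 : m ≤ m^2 := Nat.le_self_pow two_ne_zero m
  have h2 : 1*m^2 ≤ (d-1)*m^2 := Nat.mul_le_mul_right _ (by omega)
  omega

lemma st15_sum_le (d : ℕ) (b : ℕ → ℕ) (hd : 2 ≤ d)
    (hb : ∀ n, 1 ≤ n → b n = ∑ m ∈ Finset.Icc 1 n,
        if (d - 1) * m ^ 2 + 1 ≤ n then b (n - ((d - 1) * m ^ 2 + 1)) else 0)
    (n n' N : ℕ) (h1 : 1 ≤ n') (hnn' : n ≤ n') :
    (∑ m ∈ Icc 1 N, if (d-1)*m^2+1 ≤ n then b (n' - ((d-1)*m^2+1)) else 0) ≤ b n' := by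
  rw [hb n' h1, ← Finset.sum_filter, ← Finset.sum_filter]
  apply Finset.sum_le_sum_of_subset
  intro m hm
  simp only [mem_filter, mem_Icc] at hm ⊢
  have hlt := st15_part_lt d hd m hm.1.1
  set P := (d-1)*m^2+1 with hP
  omega

lemma st15_step (d : ℕ) (b : ℕ → ℕ) (hd : 2 ≤ d)
    (hb : ∀ n, 1 ≤ n → b n = ∑ m ∈ Finset.Icc 1 n,
        if (d - 1) * m ^ 2 + 1 ≤ n then b (n - ((d - 1) * m ^ 2 + 1)) else 0)
    (n m : ℕ) (hm : 1 ≤ m) : b n ≤ b (n + ((d-1)*m^2+1)) := by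
  have key : (if (d-1)*m^2+1 ≤ n + ((d-1)*m^2+1) then
      b (n + ((d-1)*m^2+1) - ((d-1)*m^2+1)) else 0) ≤
      ∑ j ∈ Icc 1 m, if (d-1)*j^2+1 ≤ n + ((d-1)*m^2+1) then
        b (n + ((d-1)*m^2+1) - ((d-1)*j^2+1)) else 0 :=
    Finset.single_le_sum (f := fun j => if (d-1)*j^2+1 ≤ n + ((d-1)*m^2+1) then
      b (n + ((d-1)*m^2+1) - ((d-1)*j^2+1)) else 0)
      (fun i _ => Nat.zero_le _) (mem_Icc.2 ⟨hm, le_refl m⟩)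
  rw [if_pos (Nat.le_add_left _ n), Nat.add_sub_cancel] at key
  exact key.trans (st15_sum_le d b hd hb _ _ m (by omega) le_rfl)

lemma st15_supermul (d : ℕ) (b : ℕ → ℕ) (hd : 2 ≤ d) (hb0 : b 0 = 1)
    (hb : ∀ n, 1 ≤ n → b n = ∑ m ∈ Finset.Icc 1 n,
        if (d - 1) * m ^ 2 + 1 ≤ n then b (n - ((d - 1) * m ^ 2 + 1)) else 0)
    : ∀ n m, b m * b n ≤ b (m + n) := by
  intro n
  induction n using Nat.strong_induction_on with
  | _ n ih =>
    intro m
    rcases Nat.eq_zero_or_pos n with rfl | hn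
    · simp [hb0]
    · rw [hb n hn, Finset.mul_sum]
      have h1 : ∀ j ∈ Icc 1 n,
          b m * (if (d-1)*j^2+1 ≤ n then b (n - ((d-1)*j^2+1)) else 0) ≤
          (if (d-1)*j^2+1 ≤ n then b (m + n - ((d-1)*j^2+1)) else 0) := by
        intro j _
        split
        · next h =>
          have h2 : n - ((d-1)*j^2+1) < n := Nat.sub_lt hn (Nat.succ_pos _)
          have h3 := ih _ h2 m
          rwa [Nat.add_sub_assoc h]
        · simp
      exact (Finset.sum_le_sum h1).trans
        (st15_sum_le d b hd hb n (m+n) n (by omega) (Nat.le_add_left n m))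

lemma st15_pow (d : ℕ) (b : ℕ → ℕ) (hd : 2 ≤ d) (hb0 : b 0 = 1)
    (hb : ∀ n, 1 ≤ n → b n = ∑ m ∈ Finset.Icc 1 n,
        if (d - 1) * m ^ 2 + 1 ≤ n then b (n - ((d - 1) * m ^ 2 + 1)) else 0)
    : ∀ q m r, b m ^ q * b r ≤ b (m * q + r) := by
  intro q
  induction q with
  | zero => intro m r; simp
  | succ q ih =>
    intro m r
    calc b m ^ (q+1) * b r = b m * (b m ^ q * b r) := by ring
    _ ≤ b m * b (m*q + r) := Nat.mul_le_mul_left _ (ih m r)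
    _ ≤ b (m + (m*q + r)) := st15_supermul d b hd hb0 hb (m*q+r) m
    _ = b (m*(q+1) + r) := by congr 1; ring

lemma st15_pos (d : ℕ) (b : ℕ → ℕ) (hd : 2 ≤ d) (hb0 : b 0 = 1)
    (hb : ∀ n, 1 ≤ n → b n = ∑ m ∈ Finset.Icc 1 n,
        if (d - 1) * m ^ 2 + 1 ≤ n then b (n - ((d - 1) * m ^ 2 + 1)) else 0)
    : ∀ n, d * ((d-1)*d^2+1) ≤ n → 1 ≤ b n := by
  set c := (d-1)*d^2+1 with hc
  have hcop : Nat.Coprime d c := by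
    have h2 := (Nat.coprime_add_mul_left_right d 1 ((d-1)*d)).2 (Nat.coprime_one_right d)
    have h3 : 1 + d*((d-1)*d) = c := by rw [hc]; ring
    rwa [h3] at h2
  have hc1 : 1 < c := by
    have : 0 < (d-1)*d^2 := Nat.mul_pos (by omega) (pow_pos (by omega) 2)
    omega
  have hfro := frobeniusNumber_pair hcop (by omega) hc1
  intro n hn
  have hmem : n ∈ AddSubmonoid.closure ({d, c} : Set ℕ) := by
    by_contra hmem
    have h4 := hfro.2 hmem
    have h5 : d ≤ d*c := Nat.le_mul_of_pos_right d (by omega)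
    set D := d*c with hD
    omega
  obtain ⟨x, y, hxy⟩ := (AddSubmonoid.mem_closure_pair d c n).1 hmem
  simp only [smul_eq_mul] at hxy
  suffices H : ∀ x y, 1 ≤ b (x*d + y*c) by rw [← hxy]; exact H x y
  intro x
  induction x with
  | zero =>
    intro y
    induction y with
    | zero => simp [hb0]
    | succ y ihy =>
      calc 1 ≤ b (0*d + y*c) := ihy
      _ ≤ b ((0*d + y*c) + c) := st15_step d b hd hb _ d (by omega)
      _ = b (0*d + (y+1)*c) := by congr 1; ring
  | succ x ihx =>
    intro y
    calc 1 ≤ b (x*d + y*c) := ihx y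
    _ ≤ b ((x*d + y*c) + ((d-1)*1^2+1)) := st15_step d b hd hb _ 1 le_rfl
    _ = b ((x+1)*d + y*c) := by
      congr 1
      have : (d-1)*1^2+1 = d := by simp; omega
      rw [this]; ring
open Finset Filter

lemma st15_sum_Icc_one (f : ℕ → ℝ) (n : ℕ) : ∑ m ∈ Icc 1 n, f m = ∑ j ∈ range n, f (j+1) := by
  induction n with
  | zero => simp
  | succ n ih => rw [Finset.sum_Icc_succ_top (by omega), ih, Finset.sum_range_succ]

lemma st15_shift (f : ℕ → ℝ) (a M : ℕ) (h : a ≤ M) :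
    ∑ n ∈ Icc a M, f (n - a) = ∑ j ∈ range (M - a + 1), f j := by
  induction M with
  | zero =>
    have : a = 0 := by omega
    subst this; simp
  | succ M ih =>
    rcases Nat.lt_or_ge M a with h1 | h1
    · have : a = M + 1 := by omega
      subst this
      simp [Finset.Icc_self]
    · rw [Finset.sum_Icc_succ_top (by omega), ih h1,
        show M + 1 - a + 1 = (M - a + 1) + 1 by omega, Finset.sum_range_succ,
        show M + 1 - a = M - a + 1 by omega, Finset.sum_range_succ, Finset.sum_range_succ]

lemma st15_summable (d : ℕ) (α : ℝ)
    (hα1 : ∑' m : ℕ, α ^ ((d - 1) * (m + 1) ^ 2 + 1) = 1) :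
    Summable (fun j : ℕ => α ^ ((d - 1) * (j + 1) ^ 2 + 1)) := by
  by_contra h
  rw [tsum_eq_zero_of_not_summable h] at hα1
  norm_num at hα1
lemma st15_upper (d : ℕ) (b : ℕ → ℕ) (hd : 2 ≤ d) (hb0 : b 0 = 1)
    (hb : ∀ n, 1 ≤ n → b n = ∑ m ∈ Finset.Icc 1 n,
        if (d - 1) * m ^ 2 + 1 ≤ n then b (n - ((d - 1) * m ^ 2 + 1)) else 0)
    (α : ℝ) (hα : α ∈ Set.Ioo (0 : ℝ) 1)
    (hα1 : ∑' m : ℕ, α ^ ((d - 1) * (m + 1) ^ 2 + 1) = 1) :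
    ∀ n, (b n : ℝ) * α ^ n ≤ 1 := by
  intro n
  induction n using Nat.strong_induction_on with
  | _ n ih =>
    rcases Nat.eq_zero_or_pos n with rfl | hn
    · simp [hb0]
    · rw [hb n hn]
      push_cast
      rw [Finset.sum_mul]
      have h1 : ∀ m ∈ Icc 1 n,
          (if (d-1)*m^2+1 ≤ n then ((b (n - ((d-1)*m^2+1)) : ℝ)) else 0) * α ^ n ≤
          α ^ ((d-1)*m^2+1) := by
        intro m _
        split
        · next h =>
          have hsplit : α ^ n = α ^ (n - ((d-1)*m^2+1)) * α ^ ((d-1)*m^2+1) := by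
            rw [← pow_add]
            congr 1
            set P := (d-1)*m^2+1 with hP
            omega
          rw [hsplit, ← mul_assoc]
          have h2 : n - ((d-1)*m^2+1) < n := Nat.sub_lt hn (Nat.succ_pos _)
          calc (b (n - ((d-1)*m^2+1)) : ℝ) * α ^ (n - ((d-1)*m^2+1)) * α ^ ((d-1)*m^2+1)
              ≤ 1 * α ^ ((d-1)*m^2+1) :=
                mul_le_mul_of_nonneg_right (ih _ h2) (pow_nonneg (le_of_lt hα.1) _)
          _ = α ^ ((d-1)*m^2+1) := one_mul _
        · rw [zero_mul]
          exact pow_nonneg hα.1.le _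
      calc ∑ m ∈ Icc 1 n, (if (d-1)*m^2+1 ≤ n then ((b (n - ((d-1)*m^2+1)) : ℝ)) else 0) * α ^ n
          ≤ ∑ m ∈ Icc 1 n, α ^ ((d-1)*m^2+1) := Finset.sum_le_sum h1
      _ = ∑ j ∈ range n, α ^ ((d-1)*(j+1)^2+1) := st15_sum_Icc_one _ n
      _ ≤ ∑' m : ℕ, α ^ ((d - 1) * (m + 1) ^ 2 + 1) :=
          Summable.sum_le_tsum _ (fun i _ => pow_nonneg hα.1.le _) (st15_summable d α hα1)
      _ = 1 := hα1
lemma st15_good (d : ℕ) (b : ℕ → ℕ) (hd : 2 ≤ d) (hb0 : b 0 = 1)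
    (hb : ∀ n, 1 ≤ n → b n = ∑ m ∈ Finset.Icc 1 n,
        if (d - 1) * m ^ 2 + 1 ≤ n then b (n - ((d - 1) * m ^ 2 + 1)) else 0)
    (α : ℝ) (hα : α ∈ Set.Ioo (0 : ℝ) 1)
    (hα1 : ∑' m : ℕ, α ^ ((d - 1) * (m + 1) ^ 2 + 1) = 1)
    (β : ℝ) (hβα : α < β) (hβ1 : β < 1) :
    ∃ m, 1 ≤ m ∧ 1 ≤ (b m : ℝ) * β ^ m := by
  by_contra hcon
  push_neg at hcon
  set β' := (α + β)/2 with hβ'def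
  have hα0 : 0 < α := hα.1
  have hβ'0 : 0 < β' := by rw [hβ'def]; linarith
  have hαβ' : α < β' := by rw [hβ'def]; linarith
  have hβ'β : β' < β := by rw [hβ'def]; linarith
  have hβ'1 : β' < 1 := by linarith
  have hβ0 : 0 < β := lt_trans hβ'0 hβ'β
  set u : ℕ → ℝ := fun n => (b n : ℝ) * β' ^ n with hu
  have hu0 : ∀ n, 0 ≤ u n := fun n => mul_nonneg (Nat.cast_nonneg _) (pow_nonneg hβ'0.le _)
  have hu00 : u 0 = 1 := by simp [hu, hb0]
  have hule : ∀ n, u n ≤ (β'/β) ^ n := by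
    intro n
    rcases Nat.eq_zero_or_pos n with rfl | hn
    · simp [hu00]
    · have h := hcon n hn
      rw [div_pow, le_div_iff₀ (pow_pos hβ0 _)]
      calc u n * β ^ n = ((b n : ℝ) * β ^ n) * β' ^ n := by rw [hu]; ring
      _ ≤ 1 * β' ^ n := mul_le_mul_of_nonneg_right h.le (pow_nonneg hβ'0.le _)
      _ = β' ^ n := one_mul _
  have hsum_u : Summable u :=
    Summable.of_nonneg_of_le hu0 hule
      (summable_geometric_of_lt_one (by positivity) ((div_lt_one hβ0).2 hβ'β))
  set T := ∑' n, u n with hT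
  have hT1 : 1 ≤ T := by
    have := Summable.le_tsum hsum_u 0 (fun j _ => hu0 j)
    rwa [hu00] at this
  -- choose N with partial β'-sum exceeding 1
  have hg := st15_summable d α hα1
  have hδ : 0 < β' ^ d - α ^ d := by
    have := pow_lt_pow_left₀ hαβ' hα0.le (by omega : d ≠ 0)
    linarith
  set δ := β' ^ d - α ^ d with hδdef
  have htend := hg.hasSum.tendsto_sum_nat
  rw [hα1] at htend
  have hev : ∀ᶠ k in atTop, 1 - δ < ∑ j ∈ range k, α ^ ((d-1)*(j+1)^2+1) :=
    htend.eventually (eventually_gt_nhds (by linarith))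
  obtain ⟨N, hNsum, hN1⟩ := (hev.and (eventually_ge_atTop 1)).exists
  set S := ∑ m ∈ Icc 1 N, β' ^ ((d-1)*m^2+1) with hS
  have hp1 : (d-1)*1^2+1 = d := by simp; omega
  have hS1 : 1 < S := by
    have ha1 : (1:ℕ) ∈ Icc 1 N := mem_Icc.2 ⟨le_rfl, hN1⟩
    have e1 : ∑ m ∈ Icc 1 N, (α:ℝ) ^ ((d-1)*m^2+1) = ∑ j ∈ range N, α ^ ((d-1)*(j+1)^2+1) :=
      st15_sum_Icc_one _ N
    have e2 : β' ^ ((d-1)*1^2+1) + ∑ m ∈ (Icc 1 N).erase 1, β' ^ ((d-1)*m^2+1)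
        = ∑ m ∈ Icc 1 N, β' ^ ((d-1)*m^2+1) :=
      Finset.add_sum_erase _ (fun m => β' ^ ((d-1)*m^2+1)) ha1
    have e3 : α ^ ((d-1)*1^2+1) + ∑ m ∈ (Icc 1 N).erase 1, α ^ ((d-1)*m^2+1)
        = ∑ m ∈ Icc 1 N, α ^ ((d-1)*m^2+1) :=
      Finset.add_sum_erase _ (fun m => α ^ ((d-1)*m^2+1)) ha1
    have e4 : ∑ m ∈ (Icc 1 N).erase 1, α ^ ((d-1)*m^2+1)
        ≤ ∑ m ∈ (Icc 1 N).erase 1, β' ^ ((d-1)*m^2+1) :=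
      Finset.sum_le_sum (fun m _ => pow_le_pow_left₀ hα0.le hαβ'.le _)
    rw [hp1] at e2 e3
    rw [e1] at e3
    rw [hS, ← e2]
    have : 1 - δ < ∑ m ∈ Icc 1 N, (α:ℝ) ^ ((d-1)*m^2+1) := by rw [e1]; exact hNsum
    -- S ≥ β'^d + Σ_erase α ≥ δ + α^d + Σ_erase α = δ + Σ_Icc α > δ + 1 - δ = 1
    rw [hδdef] at *
    nlinarith [e4]
  -- partial sums
  set A : ℕ → ℝ := fun M => ∑ j ∈ range (M+1), u j with hA
  have hAmono : Monotone A := fun i j hij =>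
    Finset.sum_le_sum_of_subset_of_nonneg (Finset.range_subset_range.2 (by omega))
      (fun k _ _ => hu0 k)
  have hA0 : ∀ M, 0 ≤ A M := fun M => Finset.sum_nonneg (fun k _ => hu0 k)
  have hAtend : Tendsto A atTop (nhds T) :=
    hsum_u.hasSum.tendsto_sum_nat.comp (tendsto_add_atTop_nat 1)
  set P := (d-1)*N^2+1 with hP
  have hpm_le : ∀ m ∈ Icc 1 N, (d-1)*m^2+1 ≤ P := by
    intro m hm
    rw [hP]
    have : m^2 ≤ N^2 := Nat.pow_le_pow_left (mem_Icc.1 hm).2 2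
    exact Nat.add_le_add_right (Nat.mul_le_mul_left _ this) 1
  have key : ∀ M, P ≤ M → 1 + S * A (M - P) ≤ A M := by
    intro M hM
    have hM1 : 1 ≤ M := le_trans (Nat.succ_le_succ (Nat.zero_le _)) hM
    -- A M = u 0 + ∑_{n ∈ Icc 1 M} u n
    have expand : A M = ∑ n ∈ Icc 1 M, u n + u 0 := by
      simp only [hA]
      rw [Finset.sum_range_succ' u M, st15_sum_Icc_one (fun n => u n) M]
    -- termwise lower bound for u n
    have step1 : ∀ n ∈ Icc 1 M,
        (∑ m ∈ Icc 1 N, if (d-1)*m^2+1 ≤ n then β'^((d-1)*m^2+1) * u (n - ((d-1)*m^2+1)) else 0)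
          ≤ u n := by
      intro n hn
      have hn1 : 1 ≤ n := (mem_Icc.1 hn).1
      have hnat := st15_sum_le d b hd hb n n N hn1 le_rfl
      have hcast : (∑ m ∈ Icc 1 N,
          if (d-1)*m^2+1 ≤ n then ((b (n - ((d-1)*m^2+1)) : ℝ)) else 0) ≤ (b n : ℝ) := by
        exact_mod_cast hnat
      have h5 := mul_le_mul_of_nonneg_right hcast (pow_nonneg hβ'0.le n : (0:ℝ) ≤ β'^n)
      rw [Finset.sum_mul] at h5
      calc (∑ m ∈ Icc 1 N,
            if (d-1)*m^2+1 ≤ n then β'^((d-1)*m^2+1) * u (n - ((d-1)*m^2+1)) else 0)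
          = ∑ m ∈ Icc 1 N,
            (if (d-1)*m^2+1 ≤ n then ((b (n - ((d-1)*m^2+1)) : ℝ)) else 0) * β'^n := by
            apply Finset.sum_congr rfl
            intro m _
            split
            · next h =>
              rw [hu]
              have hsplit : (β':ℝ) ^ n = β' ^ ((d-1)*m^2+1) * β' ^ (n - ((d-1)*m^2+1)) := by
                rw [← pow_add]
                congr 1
                set Q := (d-1)*m^2+1 with hQ
                omega
              rw [hsplit]; ring
            · rw [zero_mul]
      _ ≤ (b n : ℝ) * β'^n := h5
      _ = u n := by rw [hu]
    -- sum over n and swap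
    have step2 : S * A (M - P) ≤ ∑ n ∈ Icc 1 M, u n := by
      have hswap : ∑ n ∈ Icc 1 M, ∑ m ∈ Icc 1 N,
          (if (d-1)*m^2+1 ≤ n then β'^((d-1)*m^2+1) * u (n - ((d-1)*m^2+1)) else 0)
          = ∑ m ∈ Icc 1 N, ∑ n ∈ Icc 1 M,
          (if (d-1)*m^2+1 ≤ n then β'^((d-1)*m^2+1) * u (n - ((d-1)*m^2+1)) else 0) :=
        Finset.sum_comm
      have inner : ∀ m ∈ Icc 1 N,
          β'^((d-1)*m^2+1) * A (M - P) ≤ ∑ n ∈ Icc 1 M,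
          (if (d-1)*m^2+1 ≤ n then β'^((d-1)*m^2+1) * u (n - ((d-1)*m^2+1)) else 0) := by
        intro m hm
        have hpm := hpm_le m hm
        have hpmM : (d-1)*m^2+1 ≤ M := le_trans hpm hM
        have efilter : Finset.filter (fun n => (d-1)*m^2+1 ≤ n) (Icc 1 M)
            = Icc ((d-1)*m^2+1) M := by
          ext n
          simp only [Finset.mem_filter, mem_Icc]
          set Q := (d-1)*m^2+1 with hQ
          omega
        have : ∑ n ∈ Icc 1 M,
            (if (d-1)*m^2+1 ≤ n then β'^((d-1)*m^2+1) * u (n - ((d-1)*m^2+1)) else 0)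
            = β'^((d-1)*m^2+1) * A (M - ((d-1)*m^2+1)) := by
          simp only [hA]
          rw [← Finset.sum_filter, efilter,
            st15_shift (fun k => β'^((d-1)*m^2+1) * u k) _ _ hpmM, Finset.mul_sum]
        rw [this]
        apply mul_le_mul_of_nonneg_left _ (pow_nonneg hβ'0.le _)
        exact hAmono (Nat.sub_le_sub_left hpm M)
      calc S * A (M - P) = ∑ m ∈ Icc 1 N, β'^((d-1)*m^2+1) * A (M - P) := by
            rw [hS, Finset.sum_mul]
      _ ≤ ∑ m ∈ Icc 1 N, ∑ n ∈ Icc 1 M,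
          (if (d-1)*m^2+1 ≤ n then β'^((d-1)*m^2+1) * u (n - ((d-1)*m^2+1)) else 0) :=
            Finset.sum_le_sum inner
      _ = ∑ n ∈ Icc 1 M, ∑ m ∈ Icc 1 N,
          (if (d-1)*m^2+1 ≤ n then β'^((d-1)*m^2+1) * u (n - ((d-1)*m^2+1)) else 0) :=
            hswap.symm
      _ ≤ ∑ n ∈ Icc 1 M, u n := Finset.sum_le_sum step1
    rw [expand, hu00]
    linarith [step2]
  -- take limits
  have h6 : Tendsto (fun M => 1 + S * A (M - P)) atTop (nhds (1 + S * T)) := by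
    have h7 := hAtend.comp (Filter.tendsto_sub_atTop_nat P)
    exact tendsto_const_nhds.add (tendsto_const_nhds.mul h7)
  have h8 : 1 + S * T ≤ T :=
    le_of_tendsto_of_tendsto h6 hAtend ((eventually_ge_atTop P).mono key)
  nlinarith [hT1, hS1, h8]
theorem stmt15 (d : ℕ) (hd : 2 ≤ d) (b : ℕ → ℕ) (hb0 : b 0 = 1)
    (hb : ∀ n, 1 ≤ n → b n = ∑ m ∈ Finset.Icc 1 n,
        if (d - 1) * m ^ 2 + 1 ≤ n then b (n - ((d - 1) * m ^ 2 + 1)) else 0)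
    (α : ℝ) (hα : α ∈ Set.Ioo (0 : ℝ) 1)
    (hα1 : ∑' m : ℕ, α ^ ((d - 1) * (m + 1) ^ 2 + 1) = 1) :
    Filter.Tendsto (fun n : ℕ => (b n : ℝ) ^ (1 / (n : ℝ))) Filter.atTop (nhds (1 / α)) := by
  have hα0 : 0 < α := hα.1
  rw [tendsto_order]
  constructor
  · -- lower bound
    intro c hc
    have h1α : 1 < 1/α := by rw [lt_div_iff₀ hα0, one_mul]; exact hα.2
    set c' := max c 1 with hc'def
    have hc'1 : 1 ≤ c' := le_max_right _ _
    have hc'lt : c' < 1/α := max_lt hc h1α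
    have hc'0 : 0 < c' := lt_of_lt_of_le one_pos hc'1
    have hinv : α < 1/c' := by
      rw [lt_div_iff₀ hα0] at hc'lt
      rw [lt_div_iff₀ hc'0]
      linarith
    set β := (α + 1/c')/2 with hβdef
    have hβα : α < β := by rw [hβdef]; linarith
    have hβc' : β < 1/c' := by rw [hβdef]; linarith
    have hβ1 : β < 1 := lt_of_lt_of_le hβc' ((div_le_one hc'0).2 hc'1)
    have hβ0 : 0 < β := lt_trans hα0 hβα
    have hcβ : c < 1/β := by
      have h2 : c' < 1/β := by
        rw [lt_div_iff₀ hβ0]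
        rw [lt_div_iff₀ hc'0] at hβc'
        linarith
      exact lt_of_le_of_lt (le_max_left c 1) h2
    obtain ⟨m, hm1, hmg⟩ := st15_good d b hd hb0 hb α hα hα1 β hβα hβ1
    set n₁ := d * ((d-1)*d^2+1) with hn₁def
    have hbm : ((β⁻¹:ℝ))^m ≤ (b m : ℝ) := by
      rw [← div_le_iff₀ (pow_pos hβ0 m)] at hmg
      rw [inv_pow, ← one_div]
      exact hmg
    have hmain : ∀ n, n₁ ≤ n → 1 ≤ n → (β⁻¹)^n * β^(n₁ + m) ≤ (b n : ℝ) := by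
      intro n hn hn1
      set q := (n - n₁) / m with hq
      have hm0 : 0 < m := hm1
      obtain ⟨s, hslt, hseq⟩ : ∃ s, s < m ∧ m * q + s = n - n₁ :=
        ⟨(n - n₁) % m, Nat.mod_lt _ hm0, by rw [hq]; exact Nat.div_add_mod _ _⟩
      set MQ := m * q with hMQ
      set r := n - MQ with hr
      have hrn₁ : n₁ ≤ r := by omega
      have hrK : r ≤ n₁ + m := by omega
      have hqmr : MQ + r = n := by omega
      have hbn := st15_pow d b hd hb0 hb q m r
      rw [← hMQ, hqmr] at hbn
      have hbr : 1 ≤ b r := st15_pos d b hd hb0 hb r hrn₁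
      have h2 : (b m : ℝ)^q ≤ (b n : ℝ) := by
        have h3 : b m ^ q ≤ b n :=
          le_trans (Nat.le_mul_of_pos_right _ hbr) hbn
        exact_mod_cast h3
      calc (β⁻¹)^n * β^(n₁+m) ≤ (β⁻¹)^n * β^r :=
            mul_le_mul_of_nonneg_left (pow_le_pow_of_le_one hβ0.le hβ1.le hrK)
              (pow_nonneg (inv_nonneg.2 hβ0.le) n)
      _ = (β⁻¹)^MQ := by
          rw [← hqmr, pow_add, mul_assoc, ← mul_pow, inv_mul_cancel₀ hβ0.ne', one_pow, mul_one]
      _ = ((β⁻¹)^m)^q := by rw [hMQ, pow_mul]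
      _ ≤ (b m : ℝ)^q := pow_le_pow_left₀ (pow_nonneg (inv_nonneg.2 hβ0.le) m) hbm q
      _ ≤ (b n : ℝ) := h2
    have hY : Filter.Tendsto (fun n : ℕ => β⁻¹ * (β^(n₁+m)) ^ (1/(n:ℝ)))
        Filter.atTop (nhds (β⁻¹ * (β^(n₁+m)) ^ (0:ℝ))) :=
      tendsto_const_nhds.mul (Filter.Tendsto.rpow tendsto_const_nhds
        tendsto_one_div_atTop_nhds_zero_nat (Or.inl (ne_of_gt (pow_pos hβ0 _))))
    rw [Real.rpow_zero, mul_one] at hY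
    have hc1β : c < β⁻¹ := by rwa [← one_div]
    have hevY : ∀ᶠ n : ℕ in Filter.atTop, c < β⁻¹ * (β^(n₁+m)) ^ (1/(n:ℝ)) :=
      hY.eventually (eventually_gt_nhds hc1β)
    filter_upwards [hevY, Filter.eventually_ge_atTop (max n₁ 1)] with n hYn hn
    have hn1 : 1 ≤ n := le_trans (le_max_right _ _) hn
    have hnn₁ : n₁ ≤ n := le_trans (le_max_left _ _) hn
    refine lt_of_lt_of_le hYn ?_
    have hne : ((n:ℝ)) ≠ 0 := Nat.cast_ne_zero.2 (by omega)
    calc β⁻¹ * (β^(n₁+m)) ^ (1/(n:ℝ)) = ((β⁻¹)^n * β^(n₁+m)) ^ (1/(n:ℝ)) := by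
          rw [Real.mul_rpow (pow_nonneg (inv_nonneg.2 hβ0.le) n) (pow_nonneg hβ0.le _)]
          congr 1
          rw [← Real.rpow_natCast β⁻¹ n, ← Real.rpow_mul (inv_nonneg.2 hβ0.le),
            mul_one_div, div_self hne, Real.rpow_one]
    _ ≤ (b n : ℝ) ^ (1/(n:ℝ)) :=
          Real.rpow_le_rpow (by positivity) (hmain n hnn₁ hn1) (by positivity)
  · -- upper bound
    intro c hc
    filter_upwards [Filter.eventually_ge_atTop 1] with n hn
    have hub := st15_upper d b hd hb0 hb α hα hα1 n
    have h2 : (b n : ℝ) ≤ (α⁻¹)^n := by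
      rw [← le_div_iff₀ (pow_pos hα0 n)] at hub
      rw [inv_pow, ← one_div]
      exact hub
    have hne : ((n:ℝ)) ≠ 0 := Nat.cast_ne_zero.2 (by omega)
    have h3 : (b n : ℝ)^(1/(n:ℝ)) ≤ α⁻¹ := by
      calc (b n:ℝ)^(1/(n:ℝ)) ≤ ((α⁻¹)^n)^(1/(n:ℝ)) :=
            Real.rpow_le_rpow (Nat.cast_nonneg _) h2 (by positivity)
      _ = α⁻¹ := by
            rw [← Real.rpow_natCast α⁻¹ n, ← Real.rpow_mul (inv_nonneg.2 hα0.le),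
              mul_one_div, div_self hne, Real.rpow_one]
    have h4 : α⁻¹ < c := by rwa [← one_div]
    exact lt_of_le_of_lt h3 h4
end

section
/- Let g_n be the number of compositions of n into parts from the set {k! : k ≥ 1} = {1, 2, 6, 24, 120, ...}. Then lim_{n→∞} g_n^{1/n} exists and equals 1/α where α ∈ (0,1) is the unique solution of Σ_{k≥1} t^{k!} = 1. -/
open Filter Set
open scoped ENNReal NNReal

section aux

private lemma sum_shift {M : Type*} [AddCommMonoid M] (F : ℕ → M) (n : ℕ) :
    ∑ k ∈ Finset.Icc 1 n, F k = ∑ j ∈ Finset.range n, F (j + 1) := by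
  induction n with
  | zero => simp
  | succ n ih =>
    rw [Finset.sum_range_succ, ← ih, Finset.sum_Icc_succ_top (by omega)]

variable (g : ℕ → ℕ) (α : ℝ)

private lemma sumfac (hα : α ∈ Set.Ioo (0:ℝ) 1) :
    Summable fun k : ℕ => α ^ Nat.factorial (k + 1) := by
  obtain ⟨h0, h1⟩ := hα
  have hgeo : Summable fun k : ℕ => α ^ (k + 1) := by
    simp only [pow_succ]
    exact (summable_geometric_of_lt_one h0.le h1).mul_right α
  apply Summable.of_nonneg_of_le (fun k => by positivity) _ hgeo
  intro k
  exact pow_le_pow_of_le_one h0.le h1.le (Nat.self_le_factorial (k + 1))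

private lemma sumIcc_le (hα : α ∈ Set.Ioo (0:ℝ) 1)
    (hα1 : ∑' k : ℕ, α ^ Nat.factorial (k + 1) = 1) (n : ℕ) :
    ∑ k ∈ Finset.Icc 1 n, α ^ Nat.factorial k ≤ 1 := by
  obtain ⟨h0, h1⟩ := id hα
  rw [sum_shift (fun k => α ^ Nat.factorial k) n, ← hα1]
  exact Summable.sum_le_tsum _ (fun k _ => by positivity) (sumfac α hα)

variable (hg0 : g 0 = 1)
  (hg : ∀ n, 1 ≤ n → g n = ∑ k ∈ Finset.Icc 1 n,
      if Nat.factorial k ≤ n then g (n - Nat.factorial k) else 0)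

include hg0 hg

private lemma g_one_le : ∀ n, 1 ≤ g n := by
  intro n
  induction n using Nat.strong_induction_on with
  | _ n ih =>
    rcases Nat.eq_zero_or_pos n with h | h
    · simp [h, hg0]
    · rw [hg n h]
      calc (1:ℕ) ≤ g (n - 1) := ih (n - 1) (by omega)
        _ = if Nat.factorial 1 ≤ n then g (n - Nat.factorial 1) else 0 := by
              rw [Nat.factorial_one, if_pos (show 1 ≤ n from h)]
        _ ≤ ∑ k ∈ Finset.Icc 1 n, if Nat.factorial k ≤ n then g (n - Nat.factorial k) else 0 :=
              Finset.single_le_sum (f := fun k => if Nat.factorial k ≤ n then g (n - Nat.factorial k) else 0) (a := 1) (fun k _ => Nat.zero_le _)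
                (Finset.mem_Icc.mpr ⟨le_rfl, h⟩)

private lemma g_upper (hα : α ∈ Set.Ioo (0:ℝ) 1)
    (hα1 : ∑' k : ℕ, α ^ Nat.factorial (k + 1) = 1) :
    ∀ n, (g n : ℝ) * α ^ n ≤ 1 := by
  obtain ⟨h0, h1⟩ := hα
  intro n
  induction n using Nat.strong_induction_on with
  | _ n ih =>
    rcases Nat.eq_zero_or_pos n with h | h
    · simp [h, hg0]
    · rw [hg n h]
      push_cast
      rw [Finset.sum_mul]
      calc ∑ k ∈ Finset.Icc 1 n,
            (if Nat.factorial k ≤ n then (g (n - Nat.factorial k) : ℝ) else 0) * α ^ n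
          ≤ ∑ k ∈ Finset.Icc 1 n, α ^ Nat.factorial k := by
            apply Finset.sum_le_sum
            intro k hk
            simp only [Finset.mem_Icc] at hk
            by_cases hkn : Nat.factorial k ≤ n
            · rw [if_pos hkn]
              have hfac1 : 1 ≤ Nat.factorial k := Nat.factorial_pos k
              have hpow : α ^ n = α ^ (n - Nat.factorial k) * α ^ Nat.factorial k := by
                rw [← pow_add]; congr 1; omega
              rw [hpow, ← mul_assoc]
              calc (g (n - Nat.factorial k) : ℝ) * α ^ (n - Nat.factorial k)
                    * α ^ Nat.factorial k
                  ≤ 1 * α ^ Nat.factorial k := by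
                    apply mul_le_mul_of_nonneg_right _ (by positivity)
                    exact ih _ (by omega)
                _ = α ^ Nat.factorial k := one_mul _
            · rw [if_neg hkn, zero_mul]
              positivity
        _ ≤ 1 := sumIcc_le α ⟨h0, h1⟩ hα1 n

private lemma g_supermul : ∀ m n, g m * g n ≤ g (m + n) := by
  intro m n
  induction n using Nat.strong_induction_on with
  | _ n ih =>
    rcases Nat.eq_zero_or_pos n with h | h
    · simp [h, hg0]
    · rw [hg n h, hg (m + n) (by omega), Finset.mul_sum]
      calc ∑ k ∈ Finset.Icc 1 n,
            g m * (if Nat.factorial k ≤ n then g (n - Nat.factorial k) else 0)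
          ≤ ∑ k ∈ Finset.Icc 1 n,
            (if Nat.factorial k ≤ m + n then g (m + n - Nat.factorial k) else 0) := by
            apply Finset.sum_le_sum
            intro k hk
            simp only [Finset.mem_Icc] at hk
            by_cases hkn : Nat.factorial k ≤ n
            · have hfac1 : 1 ≤ Nat.factorial k := Nat.factorial_pos k
              rw [if_pos hkn, if_pos (by omega : Nat.factorial k ≤ m + n)]
              have heq : m + n - Nat.factorial k = m + (n - Nat.factorial k) := by omega
              rw [heq]
              exact ih _ (by omega)
            · rw [if_neg hkn, mul_zero]
              exact Nat.zero_le _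
        _ ≤ ∑ k ∈ Finset.Icc 1 (m + n),
            (if Nat.factorial k ≤ m + n then g (m + n - Nat.factorial k) else 0) := by
            apply Finset.sum_le_sum_of_subset_of_nonneg
            · exact Finset.Icc_subset_Icc_right (by omega)
            · intro k _ _; exact Nat.zero_le _

private lemma g_key (t : ℝ) (hα : α ∈ Set.Ioo (0:ℝ) 1)
    (hα1 : ∑' k : ℕ, α ^ Nat.factorial (k + 1) = 1)
    (hαt : α ≤ t) (hsum : Summable fun n : ℕ => (g n : ℝ) * t ^ n) : False := by
  obtain ⟨h0, h1⟩ := hα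
  have ht0 : (0:ℝ) ≤ t := le_trans h0.le hαt
  set τ : ℝ≥0∞ := ENNReal.ofReal t with hτdef
  set S : ℝ≥0∞ := ∑' n : ℕ, (g n : ℝ≥0∞) * τ ^ n with hSdef
  have hterm : ∀ n : ℕ, (g n : ℝ≥0∞) * τ ^ n = ENNReal.ofReal ((g n : ℝ) * t ^ n) := by
    intro n
    rw [ENNReal.ofReal_mul (by positivity), ← ENNReal.ofReal_pow ht0,
      ENNReal.ofReal_natCast]
  have hS_eq : S = ENNReal.ofReal (∑' n : ℕ, (g n : ℝ) * t ^ n) := by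
    rw [ENNReal.ofReal_tsum_of_nonneg (fun n => by positivity) hsum, hSdef]
    exact tsum_congr hterm
  have hS_top : S ≠ ⊤ := by rw [hS_eq]; exact ENNReal.ofReal_ne_top
  -- the functional equation
  have key : S = 1 + (∑' k : ℕ, τ ^ Nat.factorial (k + 1)) * S := by
    have h1' : S = (g 0 : ℝ≥0∞) * τ ^ 0 + ∑' n : ℕ, (g (n + 1) : ℝ≥0∞) * τ ^ (n + 1) :=
      tsum_eq_zero_add' ENNReal.summable
    have h2 : ∀ n : ℕ, (g (n + 1) : ℝ≥0∞) * τ ^ (n + 1)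
        = ∑' k : ℕ, (if Nat.factorial (k + 1) ≤ n + 1
            then (g (n + 1 - Nat.factorial (k + 1)) : ℝ≥0∞) * τ ^ (n + 1) else 0) := by
      intro n
      rw [tsum_eq_sum (s := Finset.range (n + 1)) (by
        intro j hj
        simp only [Finset.mem_range, not_lt] at hj
        have : ¬ Nat.factorial (j + 1) ≤ n + 1 := by
          have := Nat.self_le_factorial (j + 1)
          omega
        simp [this])]
      rw [hg (n + 1) (by omega)]
      have hcast : ((∑ k ∈ Finset.Icc 1 (n+1),
          if Nat.factorial k ≤ n + 1 then g (n + 1 - Nat.factorial k) else 0 : ℕ) : ℝ≥0∞)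
          = ∑ k ∈ Finset.Icc 1 (n+1),
            (if Nat.factorial k ≤ n + 1 then (g (n + 1 - Nat.factorial k) : ℝ≥0∞) else 0) := by
        push_cast
        exact Finset.sum_congr rfl (fun k _ => by split <;> simp)
      rw [hcast, Finset.sum_mul,
        sum_shift (fun k => (if Nat.factorial k ≤ n + 1
          then (g (n + 1 - Nat.factorial k) : ℝ≥0∞) else 0) * τ ^ (n + 1)) (n + 1)]
      exact Finset.sum_congr rfl (fun j _ => by rw [ite_mul, zero_mul])
    have h3 : ∀ k : ℕ, (∑' n : ℕ, (if Nat.factorial (k + 1) ≤ n + 1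
        then (g (n + 1 - Nat.factorial (k + 1)) : ℝ≥0∞) * τ ^ (n + 1) else 0))
        = τ ^ Nat.factorial (k + 1) * S := by
      intro k
      set p := Nat.factorial (k + 1) with hp
      have hp1 : 1 ≤ p := Nat.factorial_pos (k + 1)
      have hshift := Function.Injective.tsum_eq
        (f := fun n : ℕ => (if p ≤ n + 1
            then (g (n + 1 - p) : ℝ≥0∞) * τ ^ (n + 1) else 0))
        (g := fun m : ℕ => m + (p - 1)) (add_left_injective (p - 1))
        (by
          intro n hn
          simp only [Function.mem_support] at hn
          have hpn : p ≤ n + 1 := by by_contra hc; simp [hc] at hn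
          exact ⟨n - (p - 1), by show n - (p - 1) + (p - 1) = n; omega⟩)
      rw [← hshift]
      have hval : ∀ m : ℕ, (if p ≤ m + (p - 1) + 1
          then (g (m + (p - 1) + 1 - p) : ℝ≥0∞) * τ ^ (m + (p - 1) + 1) else 0)
          = τ ^ p * ((g m : ℝ≥0∞) * τ ^ m) := by
        intro m
        have e1 : p ≤ m + (p - 1) + 1 := by omega
        have e2 : m + (p - 1) + 1 - p = m := by omega
        have e3 : m + (p - 1) + 1 = p + m := by omega
        rw [if_pos e1, e2, e3, pow_add]
        ring
      rw [tsum_congr hval, ENNReal.tsum_mul_left]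
    calc S = (g 0 : ℝ≥0∞) * τ ^ 0 + ∑' n : ℕ, (g (n + 1) : ℝ≥0∞) * τ ^ (n + 1) := h1'
      _ = 1 + ∑' n : ℕ, ∑' k : ℕ, (if Nat.factorial (k + 1) ≤ n + 1
            then (g (n + 1 - Nat.factorial (k + 1)) : ℝ≥0∞) * τ ^ (n + 1) else 0) := by
          rw [hg0, tsum_congr h2]; simp
      _ = 1 + ∑' k : ℕ, ∑' n : ℕ, (if Nat.factorial (k + 1) ≤ n + 1
            then (g (n + 1 - Nat.factorial (k + 1)) : ℝ≥0∞) * τ ^ (n + 1) else 0) := by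
          rw [ENNReal.tsum_comm]
      _ = 1 + ∑' k : ℕ, τ ^ Nat.factorial (k + 1) * S := by rw [tsum_congr h3]
      _ = 1 + (∑' k : ℕ, τ ^ Nat.factorial (k + 1)) * S := by rw [ENNReal.tsum_mul_right]
  -- ∑' τ^{(k+1)!} ≥ 1
  have hF : (1 : ℝ≥0∞) ≤ ∑' k : ℕ, τ ^ Nat.factorial (k + 1) := by
    have h1eq : (1 : ℝ≥0∞) = ENNReal.ofReal (∑' k : ℕ, α ^ Nat.factorial (k + 1)) := by
      rw [hα1]; simp
    rw [h1eq, ENNReal.ofReal_tsum_of_nonneg (fun k => by positivity) (sumfac α ⟨h0, h1⟩)]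
    apply ENNReal.tsum_le_tsum
    intro k
    rw [hτdef, ← ENNReal.ofReal_pow ht0]
    exact ENNReal.ofReal_le_ofReal (pow_le_pow_left₀ h0.le hαt _)
  have hcontr : S < S := by
    calc S < S + 1 := ENNReal.lt_add_right hS_top one_ne_zero
      _ = 1 + S := add_comm _ _
      _ = 1 + 1 * S := by rw [one_mul]
      _ ≤ 1 + (∑' k : ℕ, τ ^ Nat.factorial (k + 1)) * S := by gcongr
      _ = S := key.symm
  exact absurd hcontr (lt_irrefl S)

end aux

theorem stmt19 (g : ℕ → ℕ) (hg0 : g 0 = 1)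
    (hg : ∀ n, 1 ≤ n → g n = ∑ k ∈ Finset.Icc 1 n,
        if Nat.factorial k ≤ n then g (n - Nat.factorial k) else 0)
    (α : ℝ) (hα : α ∈ Set.Ioo (0 : ℝ) 1)
    (hα1 : ∑' k : ℕ, α ^ Nat.factorial (k + 1) = 1) :
    Filter.Tendsto (fun n : ℕ => (g n : ℝ) ^ (1 / (n : ℝ))) Filter.atTop (nhds (1 / α)) := by
  obtain ⟨h0, h1⟩ := hα
  have hgpos : ∀ n, (0:ℝ) < g n := fun n => by
    exact_mod_cast Nat.lt_of_lt_of_le Nat.zero_lt_one (g_one_le g hg0 hg n)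
  set u : ℕ → ℝ := fun n => -Real.log (g n) with hu
  have hsub : Subadditive u := by
    intro m n
    have h := g_supermul g hg0 hg m n
    have hlog : Real.log (g m) + Real.log (g n) ≤ Real.log (g (m + n)) := by
      rw [← Real.log_mul (hgpos m).ne' (hgpos n).ne']
      apply Real.log_le_log (by exact mul_pos (hgpos m) (hgpos n))
      exact_mod_cast h
    simp only [hu]
    linarith
  have hdivlb : ∀ n : ℕ, 1 ≤ n → Real.log α ≤ u n / n := by
    intro n hn
    have hup := g_upper g α hg0 hg ⟨h0, h1⟩ hα1 n
    have hlog : Real.log (g n) + n * Real.log α ≤ 0 := by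
      have := Real.log_le_log (mul_pos (hgpos n) (by positivity)) hup
      rwa [Real.log_mul (hgpos n).ne' (by positivity), Real.log_pow, Real.log_one] at this
    have hn' : (0:ℝ) < n := by exact_mod_cast hn
    rw [le_div_iff₀ hn']
    simp only [hu]
    nlinarith
  have hbdd : BddBelow (Set.range fun n : ℕ => u n / n) := by
    refine ⟨Real.log α, ?_⟩
    rintro x ⟨n, rfl⟩
    rcases Nat.eq_zero_or_pos n with h | h
    · simp only [h, hu, hg0, Nat.cast_zero, div_zero, Nat.cast_one, Real.log_one, neg_zero]
      exact (Real.log_neg h0 h1).le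
    · exact hdivlb n h
  have htends := hsub.tendsto_lim hbdd
  have hL_ge : Real.log α ≤ hsub.lim := by
    rw [Subadditive.lim]
    apply le_csInf (Set.nonempty_Ici.image _)
    rintro x ⟨n, hn, rfl⟩
    exact hdivlb n hn
  have hL_le : hsub.lim ≤ Real.log α := by
    by_contra hc
    push_neg at hc
    set L := hsub.lim with hLdef
    set B : ℝ := Real.exp (-L) with hB
    have hB0 : 0 < B := Real.exp_pos _
    have hαB : α * B < 1 := by
      have heq : α * B = Real.exp (Real.log α - L) := by
        rw [sub_eq_add_neg, Real.exp_add, Real.exp_log h0, hB]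
      rw [heq, ← Real.exp_zero]
      exact Real.exp_lt_exp.mpr (by linarith)
    have hgB : ∀ n : ℕ, (g n : ℝ) ≤ B ^ n := by
      intro n
      rcases Nat.eq_zero_or_pos n with h | h
      · simp [h, hg0]
      · have hLle := hsub.lim_le_div hbdd (n := n) (by omega)
        have hn' : (0:ℝ) < n := by exact_mod_cast h
        rw [le_div_iff₀ hn'] at hLle
        simp only [hu] at hLle
        have hle : Real.log (g n) ≤ (n : ℝ) * (-L) := by nlinarith
        calc (g n : ℝ) = Real.exp (Real.log (g n)) := (Real.exp_log (hgpos n)).symm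
          _ ≤ Real.exp ((n : ℝ) * (-L)) := Real.exp_le_exp.mpr hle
          _ = B ^ n := by rw [hB, ← Real.exp_nat_mul]
    have hα_lt : α < 1 / B := by
      rw [lt_div_iff₀ hB0]; exact hαB
    set t : ℝ := (α + 1 / B) / 2 with ht
    have hαt : α ≤ t := by rw [ht]; linarith
    have htB : t * B < 1 := by
      have hlt : t < 1 / B := by rw [ht]; linarith
      calc t * B < (1 / B) * B := mul_lt_mul_of_pos_right hlt hB0
        _ = 1 := by field_simp
    have ht0 : 0 < t := lt_of_lt_of_le h0 hαt
    have hsum : Summable fun n : ℕ => (g n : ℝ) * t ^ n := by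
      have hgeo : Summable fun n : ℕ => (B * t) ^ n :=
        summable_geometric_of_lt_one (by positivity) (by rw [mul_comm]; exact htB)
      refine Summable.of_nonneg_of_le (fun n => by positivity) (fun n => ?_) hgeo
      rw [mul_pow]
      exact mul_le_mul_of_nonneg_right (hgB n) (by positivity)
    exact g_key g α hg0 hg t ⟨h0, h1⟩ hα1 hαt hsum
  have hL : hsub.lim = Real.log α := le_antisymm hL_le hL_ge
  rw [hL] at htends
  have hfinal : Filter.Tendsto (fun n : ℕ => Real.exp (Real.log (g n) * (1 / (n:ℝ))))
      Filter.atTop (nhds (1 / α)) := by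
    have h1' : Filter.Tendsto (fun n : ℕ => Real.log (g n) * (1 / (n:ℝ)))
        Filter.atTop (nhds (- Real.log α)) := by
      have heq : ∀ n : ℕ, Real.log (g n) * (1 / (n:ℝ)) = -(u n / n) := by
        intro n; simp only [hu]; ring
      rw [funext heq]
      exact htends.neg
    have hcomp := (Real.continuous_exp.continuousAt.tendsto).comp h1'
    have hexp : Real.exp (- Real.log α) = 1 / α := by
      rw [Real.exp_neg, Real.exp_log h0, one_div]
    rw [hexp] at hcomp
    exact hcomp
  apply hfinal.congr
  intro n
  rw [Real.rpow_def_of_pos (hgpos n)]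
end
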